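/- Let e_1 < e_2 < ... < e_n < 0 be real numbers and let N be a natural number with N > |e_1| / min{e_i - e_j : i > j}. Assume that for every μ ∈ ℤ^n with |μ| := Σ|μ_j| ≤ 4N+8, one has μ·e = 0 if and only if μ = 0. If m = (m_{ij})_{i≠j} is a family of nonnegative integers indexed by ordered pairs of distinct indices in {1,...,n} with total sum |m| ≤ 2N+4 and Σ_{i,j} m_{ij}(e_i - e_j) = 0, then writing the monomial Z^m := Π_{i≠j}(z_i z̄_j)^{m_{ij}} as z^μ z̄^ν for μ, ν ∈ ℕ^n, one has μ = ν; in particular Z^m = |z_1|^{2l_1}···|z_n|^{2l_n} for some (l_1,...,l_n) ∈ ℕ^n. -/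

import Mathlib

/-- Lemma on resonant monomials: under the nonresonance hypothesis (H3), a monomial
`Z^m = ∏_{i≠j} (z_i z̄_j)^{m_{ij}}` with `|m| ≤ 2N+4` and
`∑ m_{ij}(e_i - e_j) = 0` has equal holomorphic and antiholomorphic multi-degrees,
hence is a function of `|z_1|²,...,|z_n|²`. -/
theorem stmt0 (n : ℕ) (hn : 0 < n) (e : Fin n → ℝ) (N : ℕ)
    (hmono : ∀ i j : Fin n, i < j → e i < e j)
    (hneg : ∀ j, e j < 0)
    (hN : ∀ i j : Fin n, i < j → |e ⟨0, hn⟩| < (N : ℝ) * (e j - e i))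
    (hnonres : ∀ μ : Fin n → ℤ, (∑ j, |μ j|) ≤ 4 * (N : ℤ) + 8 →
      ((∑ j, (μ j : ℝ) * e j) = 0 ↔ μ = 0))
    (m : Fin n → Fin n → ℕ) (hdiag : ∀ i, m i i = 0)
    (hsum : (∑ i, ∑ j, m i j) ≤ 2 * N + 4)
    (hres : (∑ i, ∑ j, (m i j : ℝ) * (e i - e j)) = 0) :
    (∀ i, (∑ j, m i j) = ∑ j, m j i) ∧
    ∃ l : Fin n → ℕ, ∀ z : Fin n → ℂ,
      (∏ i, ∏ j, (z i * (starRingEnd ℂ) (z j)) ^ (m i j))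
        = ∏ i, ((‖z i‖ : ℂ)) ^ (2 * l i) := by
  set μ : Fin n → ℤ := fun i => (∑ j, (m i j : ℤ)) - (∑ j, (m j i : ℤ)) with hμ
  have hbound : (∑ j, |μ j|) ≤ 4 * (N : ℤ) + 8 := by
    have h1 : (∑ j, |μ j|) ≤ ∑ i, ((∑ j, (m i j : ℤ)) + (∑ j, (m j i : ℤ))) := by
      refine Finset.sum_le_sum fun i _ => ?_
      calc |μ i| ≤ |(∑ j, (m i j : ℤ))| + |(∑ j, (m j i : ℤ))| := abs_sub _ _
        _ = (∑ j, (m i j : ℤ)) + (∑ j, (m j i : ℤ)) := by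
            rw [abs_of_nonneg (by positivity), abs_of_nonneg (by positivity)]
    have h2 : (∑ i, ((∑ j, (m i j : ℤ)) + (∑ j, (m j i : ℤ))))
        = 2 * ∑ i, ∑ j, (m i j : ℤ) := by
      rw [Finset.sum_add_distrib]
      rw [Finset.sum_comm (f := fun i j => (m j i : ℤ))]
      ring
    have h3 : (∑ i, ∑ j, (m i j : ℤ)) ≤ 2 * (N : ℤ) + 4 := by
      exact_mod_cast hsum
    omega
  have hzero : μ = 0 := by
    apply (hnonres μ hbound).mp
    have hcomm : (∑ i, ∑ j, ((m j i : ℝ) * e i)) = ∑ i, ∑ j, ((m i j : ℝ) * e j) :=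
      Finset.sum_comm
    calc (∑ j, (μ j : ℝ) * e j)
        = ∑ i, ((∑ j, (m i j : ℝ)) - (∑ j, (m j i : ℝ))) * e i := by
          simp [hμ]
      _ = (∑ i, ∑ j, ((m i j : ℝ) * e i)) - ∑ i, ∑ j, ((m j i : ℝ) * e i) := by
          rw [← Finset.sum_sub_distrib]
          refine Finset.sum_congr rfl fun i _ => ?_
          rw [sub_mul, Finset.sum_mul, Finset.sum_mul]
      _ = ∑ i, ∑ j, (m i j : ℝ) * (e i - e j) := by
          rw [hcomm, ← Finset.sum_sub_distrib]
          refine Finset.sum_congr rfl fun i _ => ?_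
          rw [← Finset.sum_sub_distrib]
          refine Finset.sum_congr rfl fun j _ => ?_
          ring
      _ = 0 := hres
  have hrc : ∀ i, (∑ j, m i j) = ∑ j, m j i := by
    intro i
    have := congrFun hzero i
    simp only [hμ, Pi.zero_apply, sub_eq_zero] at this
    exact_mod_cast this
  refine ⟨hrc, fun i => ∑ j, m i j, fun z => ?_⟩
  calc (∏ i, ∏ j, (z i * (starRingEnd ℂ) (z j)) ^ (m i j))
      = ∏ i, ((z i) ^ (∑ j, m i j) * ∏ j, ((starRingEnd ℂ) (z j)) ^ (m i j)) := by
        refine Finset.prod_congr rfl fun i _ => ?_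
        rw [← Finset.prod_pow_eq_pow_sum, ← Finset.prod_mul_distrib]
        exact Finset.prod_congr rfl fun j _ => by rw [mul_pow]
    _ = (∏ i, (z i) ^ (∑ j, m i j)) * ∏ i, ∏ j, ((starRingEnd ℂ) (z j)) ^ (m i j) :=
        Finset.prod_mul_distrib
    _ = (∏ i, (z i) ^ (∑ j, m i j)) * ∏ i, ((starRingEnd ℂ) (z i)) ^ (∑ j, m j i) := by
        rw [Finset.prod_comm (f := fun i j => ((starRingEnd ℂ) (z j)) ^ (m i j))]
        simp [Finset.prod_pow_eq_pow_sum]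
    _ = ∏ i, ((z i) ^ (∑ j, m i j) * ((starRingEnd ℂ) (z i)) ^ (∑ j, m j i)) :=
        (Finset.prod_mul_distrib).symm
    _ = ∏ i, ((‖z i‖ : ℂ)) ^ (2 * (∑ j, m i j)) := by
        refine Finset.prod_congr rfl fun i _ => ?_
        rw [← hrc i, ← mul_pow, pow_mul]
        congr 1
        rw [Complex.mul_conj, sq]
        push_cast [← Complex.sq_norm]
        ring
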